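/- In the unlearning setup with coherence definitions, for every integer k ≥ 2 the mix-Hessian satisfies Tr(D^k) ≤ (n_r n_f)^{1−k} λ_max(S)^k, where S is the mix-coherence matrix. -/

import Mathlib

open Matrix Filter Finset Set
open scoped BigOperators

noncomputable section

/-- Frobenius norm of a real square matrix. -/
def frob {n : Type*} [Fintype n] (M : Matrix n n ℝ) : ℝ :=
  Real.sqrt (∑ i, ∑ j, (M i j) ^ 2)

open Classical in
/-- The positive semidefinite square root of a matrix (junk value `0` on non-PSD input). -/
def psdSqrt {n : Type*} [Fintype n] [DecidableEq n] (A : Matrix n n ℝ) : Matrix n n ℝ :=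
  if h : A.PosSemidef then
    h.1.eigenvectorUnitary.1 * diagonal (fun i => Real.sqrt (h.1.eigenvalues i)) *
      (star h.1.eigenvectorUnitary : Matrix n n ℝ)
  else 0

open Classical in
/-- The largest eigenvalue of a symmetric real matrix (junk value `0` otherwise). -/
def lamMax {n : Type*} [Fintype n] [DecidableEq n] (A : Matrix n n ℝ) : ℝ :=
  if h : A.IsHermitian then ⨆ i, h.eigenvalues i else 0

/-- Probability of observing the Bernoulli(B/n) selection pattern `x`. -/
def selProb (n B : ℕ) (x : Fin n → Bool) : ℝ :=
  ∏ i, if x i then (B : ℝ) / n else 1 - (B : ℝ) / n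

/-- Average Hessian of a family. -/
def Hbar {d n : ℕ} (H : Fin n → Matrix (Fin d) (Fin d) ℝ) : Matrix (Fin d) (Fin d) ℝ :=
  (n : ℝ)⁻¹ • ∑ i, H i

/-- Mean update operator `J = I − η(1−α)H_R + ηα H_F`. -/
def Jbar {d nr nf : ℕ} (η α : ℝ) (HR : Fin nr → Matrix (Fin d) (Fin d) ℝ)
    (HF : Fin nf → Matrix (Fin d) (Fin d) ℝ) : Matrix (Fin d) (Fin d) ℝ :=
  1 - (η * (1 - α)) • Hbar HR + (η * α) • Hbar HF

/-- Random update operator for the batch-selection pattern `x`. -/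
def Jop {d nr nf : ℕ} (η α : ℝ) (B : ℕ) (HR : Fin nr → Matrix (Fin d) (Fin d) ℝ)
    (HF : Fin nf → Matrix (Fin d) (Fin d) ℝ)
    (x : (Fin nr → Bool) × (Fin nf → Bool)) : Matrix (Fin d) (Fin d) ℝ :=
  1 - (η * (1 - α) / B) • (∑ r, if x.1 r then HR r else 0)
    + (η * α / B) • (∑ f, if x.2 f then HF f else 0)

/-- `C_r = η²(1−α)²(1/n_r)(1/B − 1/n_r)`. -/
def Crc (η α : ℝ) (B nr : ℕ) : ℝ :=
  η ^ 2 * (1 - α) ^ 2 * (nr : ℝ)⁻¹ * ((B : ℝ)⁻¹ - (nr : ℝ)⁻¹)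

/-- `C_f = η²α²(1/n_f)(1/B − 1/n_f)`. -/
def Cfc (η α : ℝ) (B nf : ℕ) : ℝ :=
  η ^ 2 * α ^ 2 * (nf : ℝ)⁻¹ * ((B : ℝ)⁻¹ - (nf : ℝ)⁻¹)

/-- Noise-accumulation matrices `N_k`. -/
def Nmat {d nr nf : ℕ} (η α : ℝ) (B : ℕ) (HR : Fin nr → Matrix (Fin d) (Fin d) ℝ)
    (HF : Fin nf → Matrix (Fin d) (Fin d) ℝ) : ℕ → Matrix (Fin d) (Fin d) ℝ
  | 0 => 1
  | k + 1 =>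
      Cfc η α B nf • ∑ f, HF f * Nmat η α B HR HF k * HF f
        + Crc η α B nr • ∑ r, HR r * Nmat η α B HR HF k * HR r

/-- `W_k = J_{k−1} ⋯ J_1 J_0` for a finite sequence of batch selections. -/
def Wk {d nr nf : ℕ} (η α : ℝ) (B : ℕ) (HR : Fin nr → Matrix (Fin d) (Fin d) ℝ)
    (HF : Fin nf → Matrix (Fin d) (Fin d) ℝ) {k : ℕ}
    (s : Fin k → (Fin nr → Bool) × (Fin nf → Bool)) : Matrix (Fin d) (Fin d) ℝ :=
  (List.ofFn fun i => Jop η α B HR HF (s i)).reverse.prod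

/-- `E‖w_k‖² = E Tr(W_k W_kᵀ)`, the expectation taken over the i.i.d. Bernoulli
batch selections of the `k` steps. -/
def Ewk2 {d nr nf : ℕ} (η α : ℝ) (B : ℕ) (HR : Fin nr → Matrix (Fin d) (Fin d) ℝ)
    (HF : Fin nf → Matrix (Fin d) (Fin d) ℝ) (k : ℕ) : ℝ :=
  ∑ s : Fin k → (Fin nr → Bool) × (Fin nf → Bool),
    (∏ i, selProb nr B (s i).1 * selProb nf B (s i).2) *
      (Wk η α B HR HF s * (Wk η α B HR HF s)ᵀ).trace

/-- `E[(e₁ᵀ w_k)²]`, i.e. the `(i0,i0)` entry of `E[W_k W_kᵀ]`. -/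
def Ee1 {d nr nf : ℕ} (η α : ℝ) (B : ℕ) (HR : Fin nr → Matrix (Fin d) (Fin d) ℝ)
    (HF : Fin nf → Matrix (Fin d) (Fin d) ℝ) (i0 : Fin d) (k : ℕ) : ℝ :=
  ∑ s : Fin k → (Fin nr → Bool) × (Fin nf → Bool),
    (∏ i, selProb nr B (s i).1 * selProb nf B (s i).2) *
      ((Wk η α B HR HF s * (Wk η α B HR HF s)ᵀ) i0 i0)

/-- Mixed Hessian `D_{rf} = C'_r H_r^R + C'_f H_f^F` for a retain/forget pair. -/
def Drf {d nr nf : ℕ} (Cr' Cf' : ℝ) (HR : Fin nr → Matrix (Fin d) (Fin d) ℝ)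
    (HF : Fin nf → Matrix (Fin d) (Fin d) ℝ) (p : Fin nr × Fin nf) :
    Matrix (Fin d) (Fin d) ℝ :=
  Cr' • HR p.1 + Cf' • HF p.2

/-- Mix-Hessian `D = (1/(n_r n_f)) Σ_{r,f} D_{rf}`. -/
def Dmix {d nr nf : ℕ} (Cr' Cf' : ℝ) (HR : Fin nr → Matrix (Fin d) (Fin d) ℝ)
    (HF : Fin nf → Matrix (Fin d) (Fin d) ℝ) : Matrix (Fin d) (Fin d) ℝ :=
  ((nr : ℝ) * nf)⁻¹ • ∑ p : Fin nr × Fin nf, Drf Cr' Cf' HR HF p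

/-- Mix-coherence matrix `S_{(r,f),(r',f')} = ‖D_{rf}^{1/2} D_{r'f'}^{1/2}‖_F`. -/
def Smat {d nr nf : ℕ} (Cr' Cf' : ℝ) (HR : Fin nr → Matrix (Fin d) (Fin d) ℝ)
    (HF : Fin nf → Matrix (Fin d) (Fin d) ℝ) :
    Matrix (Fin nr × Fin nf) (Fin nr × Fin nf) ℝ :=
  Matrix.of fun p q =>
    frob (psdSqrt (Drf Cr' Cf' HR HF p) * psdSqrt (Drf Cr' Cf' HR HF q))

/-- Unlearning coherence `σ = λ_max(S) / max_{(r,f)} λ_max(D_{rf})`. -/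
def cohSigma {d nr nf : ℕ} (Cr' Cf' : ℝ) (HR : Fin nr → Matrix (Fin d) (Fin d) ℝ)
    (HF : Fin nf → Matrix (Fin d) (Fin d) ℝ) : ℝ :=
  lamMax (Smat Cr' Cf' HR HF) / ⨆ p : Fin nr × Fin nf, lamMax (Drf Cr' Cf' HR HF p)

/-- Stacked filter-weight vector of the two-layer ReLU CNN signal-plus-noise model. -/
def wvec (d mfil : ℕ) (μ ξi : Fin d → ℝ) (yi : ℝ)
    (ai bi : Bool → Fin mfil → Bool) : (Bool × Fin mfil) × Fin d → ℝ :=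
  fun p =>
    ((if p.1.1 then (1 : ℝ) else -1) / mfil) *
      ((if ai p.1.1 p.1.2 then (1 : ℝ) else 0) * μ p.2 +
        (if bi p.1.1 p.1.2 then (1 : ℝ) else 0) * yi * ξi p.2)

/-- Per-sample Hessian `H_i = ℓ''_i w_i w_iᵀ` of the signal-plus-noise model. -/
def hessCNN (d mfil : ℕ) (μ ξi : Fin d → ℝ) (yi ℓi : ℝ)
    (ai bi : Bool → Fin mfil → Bool) :
    Matrix ((Bool × Fin mfil) × Fin d) ((Bool × Fin mfil) × Fin d) ℝ :=
  ℓi • vecMulVec (wvec d mfil μ ξi yi ai bi) (wvec d mfil μ ξi yi ai bi)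

/-- Mixed Hessian `D_{rf} = C'_r H_r + C'_f H_{n_r+f}` in the CNN model, with the
retain set given by the first `n_r` samples and the forget set by the last `n_f`. -/
def DrfCNN (d mfil nr nf : ℕ) (μ : Fin d → ℝ) (ξ : Fin (nr + nf) → Fin d → ℝ)
    (y ℓ : Fin (nr + nf) → ℝ) (a b : Fin (nr + nf) → Bool → Fin mfil → Bool)
    (Cr' Cf' : ℝ) (p : Fin nr × Fin nf) :
    Matrix ((Bool × Fin mfil) × Fin d) ((Bool × Fin mfil) × Fin d) ℝ :=
  Cr' • hessCNN d mfil μ (ξ (Fin.castAdd nf p.1)) (y (Fin.castAdd nf p.1))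
        (ℓ (Fin.castAdd nf p.1)) (a (Fin.castAdd nf p.1)) (b (Fin.castAdd nf p.1))
    + Cf' • hessCNN d mfil μ (ξ (Fin.natAdd nr p.2)) (y (Fin.natAdd nr p.2))
        (ℓ (Fin.natAdd nr p.2)) (a (Fin.natAdd nr p.2)) (b (Fin.natAdd nr p.2))

/-- Mix-coherence matrix of the CNN model. -/
def SmatCNN (d mfil nr nf : ℕ) (μ : Fin d → ℝ) (ξ : Fin (nr + nf) → Fin d → ℝ)
    (y ℓ : Fin (nr + nf) → ℝ) (a b : Fin (nr + nf) → Bool → Fin mfil → Bool)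
    (Cr' Cf' : ℝ) : Matrix (Fin nr × Fin nf) (Fin nr × Fin nf) ℝ :=
  Matrix.of fun p q =>
    frob (psdSqrt (DrfCNN d mfil nr nf μ ξ y ℓ a b Cr' Cf' p) *
      psdSqrt (DrfCNN d mfil nr nf μ ξ y ℓ a b Cr' Cf' q))

namespace Stmt13Aux

attribute [local instance] Matrix.frobeniusSeminormedAddCommGroup Matrix.frobeniusNormedRing

variable {m : Type*} [Fintype m] [DecidableEq m]

lemma frob_eq_norm (M : Matrix m m ℝ) : frob M = ‖M‖ := by
  rw [Matrix.frobenius_norm_def, frob, Real.sqrt_eq_rpow]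
  congr 1
  refine Finset.sum_congr rfl fun i _ => Finset.sum_congr rfl fun j _ => ?_
  rw [show (2:ℝ) = ((2:ℕ):ℝ) by norm_num, Real.rpow_natCast, Real.norm_eq_abs, sq_abs]

lemma frob_transpose (M : Matrix m m ℝ) : frob Mᵀ = frob M := by
  simp only [frob, Matrix.transpose_apply]
  rw [Finset.sum_comm]

lemma frob_nonneg (M : Matrix m m ℝ) : 0 ≤ frob M := Real.sqrt_nonneg _

lemma frob_mul_le (A B : Matrix m m ℝ) : frob (A * B) ≤ frob A * frob B := by
  simp only [frob_eq_norm]; exact norm_mul_le A B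

lemma frob_sum_le {ι : Type*} (s : Finset ι) (f : ι → Matrix m m ℝ) :
    frob (∑ i ∈ s, f i) ≤ ∑ i ∈ s, frob (f i) := by
  simp only [frob_eq_norm]; exact norm_sum_le s f

lemma frob_smul (c : ℝ) (A : Matrix m m ℝ) : frob (c • A) = |c| * frob A := by
  have : ∀ i j, ((c • A) i j) ^ 2 = c ^ 2 * (A i j) ^ 2 := by
    intro i j; simp [Matrix.smul_apply, mul_pow]
  simp only [frob, this, ← Finset.mul_sum]
  rw [Real.sqrt_mul (sq_nonneg c), Real.sqrt_sq_eq_abs]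

lemma abs_trace_mul_le (A B : Matrix m m ℝ) : |(A * B).trace| ≤ frob A * frob B := by
  have h : (A * B).trace = ∑ p : m × m, A p.1 p.2 * B p.2 p.1 := by
    rw [Matrix.trace]
    simp [Matrix.diag, Matrix.mul_apply, Fintype.sum_prod_type]
  have h2 := Finset.sum_mul_sq_le_sq_mul_sq Finset.univ
    (fun p : m × m => A p.1 p.2) (fun p : m × m => B p.2 p.1)
  have hA : (∑ p : m × m, (A p.1 p.2) ^ 2) = ∑ i, ∑ j, (A i j) ^ 2 := by
    rw [Fintype.sum_prod_type]
  have hB : (∑ p : m × m, (B p.2 p.1) ^ 2) = ∑ i, ∑ j, (B i j) ^ 2 := by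
    rw [Fintype.sum_prod_type, Finset.sum_comm]
  calc |(A * B).trace| = Real.sqrt (((A * B).trace) ^ 2) := (Real.sqrt_sq_eq_abs _).symm
    _ ≤ Real.sqrt ((∑ p : m × m, (A p.1 p.2) ^ 2) * ∑ p : m × m, (B p.2 p.1) ^ 2) := by
        apply Real.sqrt_le_sqrt; rw [h]; exact h2
    _ = frob A * frob B := by
        rw [Real.sqrt_mul (by positivity), hA, hB]; rfl

variable {ι : Type*} [Fintype ι] [DecidableEq ι]

/-- Chain bound: `frob (B p * D^k * B q) ≤ c^k * (S^(k+1)) p q`. -/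
lemma chain_bound (Dm B : ι → Matrix m m ℝ) (S : Matrix ι ι ℝ)
    (hB : ∀ p, B p * B p = Dm p) (hSdef : ∀ p q, S p q = frob (B p * B q))
    (c : ℝ) (hc : 0 ≤ c) :
    ∀ k : ℕ, ∀ p q, frob (B p * (c • ∑ r, Dm r) ^ k * B q) ≤ c ^ k * (S ^ (k+1)) p q := by
  intro k
  induction k with
  | zero =>
      intro p q
      simp only [pow_zero, mul_one, one_mul, zero_add, pow_one]
      rw [hSdef p q]
  | succ k ih =>
      intro p q
      set D : Matrix m m ℝ := c • ∑ r, Dm r with hD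
      have hexp : B p * D ^ (k+1) * B q =
          c • ∑ r, (B p * D ^ k * B r) * (B r * B q) := by
        rw [pow_succ]
        calc B p * (D ^ k * D) * B q = (B p * D ^ k) * D * B q := by
              simp only [Matrix.mul_assoc]
          _ = c • ∑ r, (B p * D ^ k * B r) * (B r * B q) := by
              rw [hD, Matrix.mul_smul, Matrix.smul_mul, Matrix.mul_sum, Finset.sum_mul]
              congr 1
              refine Finset.sum_congr rfl fun r _ => ?_
              rw [← hB r]
              simp only [Matrix.mul_assoc]
      rw [hexp]
      have h1 : frob (c • ∑ r, (B p * D ^ k * B r) * (B r * B q)) ≤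
          c * ∑ r, frob ((B p * D ^ k * B r) * (B r * B q)) := by
        rw [frob_smul, abs_of_nonneg hc]
        exact mul_le_mul_of_nonneg_left (frob_sum_le _ _) hc
      have h2 : ∀ r : ι, frob ((B p * D ^ k * B r) * (B r * B q)) ≤
          c ^ k * ((S ^ (k+1)) p r * S r q) := by
        intro r
        calc frob ((B p * D ^ k * B r) * (B r * B q))
            ≤ frob (B p * D ^ k * B r) * frob (B r * B q) := frob_mul_le _ _
          _ ≤ (c ^ k * (S ^ (k+1)) p r) * frob (B r * B q) :=
              mul_le_mul_of_nonneg_right (ih p r) (frob_nonneg _)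
          _ = c ^ k * ((S ^ (k+1)) p r * S r q) := by rw [hSdef r q]; ring
      calc frob (c • ∑ r, (B p * D ^ k * B r) * (B r * B q))
          ≤ c * ∑ r, frob ((B p * D ^ k * B r) * (B r * B q)) := h1
        _ ≤ c * ∑ r, c ^ k * ((S ^ (k+1)) p r * S r q) :=
            mul_le_mul_of_nonneg_left (Finset.sum_le_sum fun r _ => h2 r) hc
        _ = c ^ (k+1) * (S ^ (k+2)) p q := by
            rw [Finset.mul_sum]
            rw [show (S ^ (k+2)) = S ^ (k+1) * S by rw [← pow_succ]]
            rw [Matrix.mul_apply, Finset.mul_sum]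
            refine Finset.sum_congr rfl fun r _ => ?_
            ring

lemma trace_sandwich (Bp Bq X : Matrix m m ℝ) :
    ((Bp * Bp) * X * (Bq * Bq)).trace = ((Bp * X * Bq) * (Bq * Bp)).trace := by
  rw [show (Bp * Bp) * X * (Bq * Bq) = Bp * (Bp * X * Bq * Bq) by
    simp only [Matrix.mul_assoc]]
  rw [Matrix.trace_mul_comm]
  congr 1
  simp only [Matrix.mul_assoc]

/-- `Tr(D^(k+2)) ≤ c^(k+2) Tr(S^(k+2))`. -/
lemma trace_pow_le (Dm B : ι → Matrix m m ℝ) (S : Matrix ι ι ℝ)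
    (hB : ∀ p, B p * B p = Dm p) (hSdef : ∀ p q, S p q = frob (B p * B q))
    (c : ℝ) (hc : 0 ≤ c) (k : ℕ) :
    ((c • ∑ r, Dm r) ^ (k+2)).trace ≤ c ^ (k+2) * (S ^ (k+2)).trace := by
  set D : Matrix m m ℝ := c • ∑ r, Dm r with hD
  have hexp : D ^ (k+2) = (c*c) • ∑ p, ∑ q, (Dm p * D ^ k * Dm q) := by
    have h1 : D ^ (k+2) = D * D ^ k * D := by
      rw [pow_succ, pow_succ']
    rw [h1, hD]
    simp only [Matrix.smul_mul, Matrix.mul_smul, smul_smul]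
    congr 1
    rw [Finset.sum_mul, Finset.sum_mul]
    refine Finset.sum_congr rfl fun p _ => ?_
    rw [Matrix.mul_sum]
  rw [hexp, Matrix.trace_smul]
  have htr : (∑ p, ∑ q, (Dm p * D ^ k * Dm q)).trace =
      ∑ p, ∑ q, (Dm p * D ^ k * Dm q).trace := by
    rw [Matrix.trace_sum]
    exact Finset.sum_congr rfl fun p _ => Matrix.trace_sum _ _
  rw [smul_eq_mul, htr]
  have hterm : ∀ p q : ι, (Dm p * D ^ k * Dm q).trace ≤
      c ^ k * ((S ^ (k+1)) p q * S q p) := by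
    intro p q
    rw [← hB p, ← hB q, trace_sandwich]
    calc ((B p * D ^ k * B q) * (B q * B p)).trace
        ≤ |((B p * D ^ k * B q) * (B q * B p)).trace| := le_abs_self _
      _ ≤ frob (B p * D ^ k * B q) * frob (B q * B p) := abs_trace_mul_le _ _
      _ ≤ (c ^ k * (S ^ (k+1)) p q) * frob (B q * B p) :=
          mul_le_mul_of_nonneg_right (chain_bound Dm B S hB hSdef c hc k p q)
            (frob_nonneg _)
      _ = c ^ k * ((S ^ (k+1)) p q * S q p) := by rw [hSdef q p]; ring
  have hsum : ∑ p, ∑ q, (Dm p * D ^ k * Dm q).trace ≤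
      c ^ k * (S ^ (k+2)).trace := by
    calc ∑ p, ∑ q, (Dm p * D ^ k * Dm q).trace
        ≤ ∑ p, ∑ q, c ^ k * ((S ^ (k+1)) p q * S q p) :=
          Finset.sum_le_sum fun p _ => Finset.sum_le_sum fun q _ => hterm p q
      _ = c ^ k * (S ^ (k+2)).trace := by
          rw [show (S ^ (k+2)) = S * S ^ (k+1) by rw [← pow_succ']]
          rw [Matrix.trace, Finset.mul_sum, Finset.sum_comm]
          refine Finset.sum_congr rfl fun q _ => ?_
          rw [Matrix.diag, Matrix.mul_apply, Finset.mul_sum]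
          refine Finset.sum_congr rfl fun p _ => ?_
          ring
  calc (c*c) * ∑ p, ∑ q, (Dm p * D ^ k * Dm q).trace
      ≤ (c*c) * (c ^ k * (S ^ (k+2)).trace) :=
        mul_le_mul_of_nonneg_left hsum (by positivity)
    _ = c ^ (k+2) * (S ^ (k+2)).trace := by ring

end Stmt13Aux

namespace Stmt13Aux2

variable {ι : Type*} [Fintype ι] [DecidableEq ι]

lemma exists_unitary (S : Matrix ι ι ℝ) (hH : S.IsHermitian) :
    ∃ U : Matrix ι ι ℝ, U * Uᵀ = 1 ∧ Uᵀ * U = 1 ∧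
      S = U * Matrix.diagonal hH.eigenvalues * Uᵀ := by
  have hUt : star (hH.eigenvectorUnitary : Matrix ι ι ℝ) =
      (hH.eigenvectorUnitary : Matrix ι ι ℝ)ᵀ := by
    rw [Matrix.star_eq_conjTranspose, Matrix.conjTranspose_eq_transpose_of_trivial]
  refine ⟨(hH.eigenvectorUnitary : Matrix ι ι ℝ), ?_, ?_, ?_⟩
  · rw [← hUt]; exact Matrix.mem_unitaryGroup_iff.mp hH.eigenvectorUnitary.2
  · rw [← hUt]; exact Matrix.mem_unitaryGroup_iff'.mp hH.eigenvectorUnitary.2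
  · have h := hH.spectral_theorem
    rwa [Unitary.conjStarAlgAut_apply, RCLike.ofReal_real_eq_id, Function.id_comp, hUt] at h

lemma trace_pow_diag (S U : Matrix ι ι ℝ) (μ : ι → ℝ) (hUU : U * Uᵀ = 1)
    (hU'U : Uᵀ * U = 1) (hspec : S = U * Matrix.diagonal μ * Uᵀ) (k : ℕ) :
    (S ^ k).trace = ∑ i, μ i ^ k := by
  subst hspec
  have hpow : ∀ k : ℕ, (U * Matrix.diagonal μ * Uᵀ) ^ k =
      U * Matrix.diagonal (fun i => μ i ^ k) * Uᵀ := by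
    intro k
    induction k with
    | zero =>
        simp only [pow_zero]
        rw [Matrix.diagonal_one, Matrix.mul_one, hUU]
    | succ k ih =>
        rw [pow_succ, ih]
        have hmid : Uᵀ * (U * (Matrix.diagonal μ * Uᵀ)) =
            Matrix.diagonal μ * Uᵀ := by
          rw [← Matrix.mul_assoc, hU'U, Matrix.one_mul]
        calc (U * Matrix.diagonal (fun i => μ i ^ k) * Uᵀ) *
              (U * Matrix.diagonal μ * Uᵀ)
            = U * (Matrix.diagonal (fun i => μ i ^ k) *
                (Uᵀ * (U * (Matrix.diagonal μ * Uᵀ)))) := by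
              simp only [Matrix.mul_assoc]
          _ = U * ((Matrix.diagonal (fun i => μ i ^ k) *
                Matrix.diagonal μ) * Uᵀ) := by
              rw [hmid, Matrix.mul_assoc]
          _ = U * Matrix.diagonal (fun i => μ i ^ (k+1)) * Uᵀ := by
              rw [Matrix.diagonal_mul_diagonal, Matrix.mul_assoc]
              simp only [← pow_succ]
  rw [hpow k, Matrix.trace_mul_cycle, hU'U, Matrix.one_mul, Matrix.trace_diagonal]

lemma trace_pow_eig (S : Matrix ι ι ℝ) (hH : S.IsHermitian) (k : ℕ) :
    (S ^ k).trace = ∑ i, hH.eigenvalues i ^ k := by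
  obtain ⟨U, hUU, hU'U, hspec⟩ := exists_unitary S hH
  exact trace_pow_diag S U hH.eigenvalues hUU hU'U hspec k

lemma rayleigh_diag (S U : Matrix ι ι ℝ) (μ : ι → ℝ) (lam : ℝ) (hUU : U * Uᵀ = 1)
    (hU'U : Uᵀ * U = 1) (hspec : S = U * Matrix.diagonal μ * Uᵀ)
    (hlam : ∀ i, μ i ≤ lam) (x : ι → ℝ) :
    x ⬝ᵥ (S *ᵥ x) ≤ lam * (x ⬝ᵥ x) := by
  subst hspec
  set y : ι → ℝ := Uᵀ *ᵥ x with hy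
  have hvecMul : Matrix.vecMul x U = y := by
    rw [hy, Matrix.mulVec_transpose]
  have hxSx : x ⬝ᵥ ((U * Matrix.diagonal μ * Uᵀ) *ᵥ x) = ∑ i, μ i * (y i)^2 := by
    rw [← Matrix.mulVec_mulVec, ← Matrix.mulVec_mulVec,
      Matrix.dotProduct_mulVec, hvecMul]
    simp only [dotProduct, Matrix.mulVec_diagonal]
    exact Finset.sum_congr rfl fun i _ => by ring
  have hxx : x ⬝ᵥ x = ∑ i, (y i)^2 := by
    have h1 : y ⬝ᵥ y = (U *ᵥ y) ⬝ᵥ x := by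
      rw [hy, Matrix.dotProduct_mulVec]
      congr 1
      rw [← Matrix.mulVec_transpose, Matrix.transpose_transpose]
    have h2 : U *ᵥ y = x := by
      rw [hy, Matrix.mulVec_mulVec, hUU, Matrix.one_mulVec]
    have h3 : y ⬝ᵥ y = x ⬝ᵥ x := by rw [h1, h2]
    rw [← h3]
    simp [dotProduct, sq]
  rw [hxSx, hxx, Finset.mul_sum]
  exact Finset.sum_le_sum fun i _ => mul_le_mul_of_nonneg_right (hlam i) (sq_nonneg _)

lemma rayleigh_le [Nonempty ι] (S : Matrix ι ι ℝ) (hH : S.IsHermitian) (x : ι → ℝ) :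
    x ⬝ᵥ (S *ᵥ x) ≤ (⨆ i, hH.eigenvalues i) * (x ⬝ᵥ x) := by
  obtain ⟨U, hUU, hU'U, hspec⟩ := exists_unitary S hH
  exact rayleigh_diag S U hH.eigenvalues _ hUU hU'U hspec
    (fun i => le_ciSup (Set.Finite.bddAbove (Set.finite_range _)) i) x

lemma abs_eigen_le [Nonempty ι] (S : Matrix ι ι ℝ) (hH : S.IsHermitian)
    (hnn : ∀ p q, 0 ≤ S p q) (j : ι) :
    |hH.eigenvalues j| ≤ ⨆ i, hH.eigenvalues i := by
  have heig : S *ᵥ ⇑(hH.eigenvectorBasis j) =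
      hH.eigenvalues j • ⇑(hH.eigenvectorBasis j) := hH.mulVec_eigenvectorBasis j
  set v : ι → ℝ := ⇑(hH.eigenvectorBasis j) with hv
  have hnorm : ∑ i, v i * v i = 1 := by
    have h := (hH.eigenvectorBasis).orthonormal.1 j
    rw [EuclideanSpace.norm_eq] at h
    have h2 : ∑ i, ‖(hH.eigenvectorBasis j) i‖ ^ 2 = 1 := by
      have := congrArg (· ^ 2) h
      simpa [Real.sq_sqrt (Finset.sum_nonneg fun i _ => sq_nonneg _)] using this
    rw [← h2]
    refine Finset.sum_congr rfl fun i _ => ?_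
    rw [Real.norm_eq_abs, sq_abs, sq]
  have hvv : v ⬝ᵥ v = 1 := by simpa [dotProduct] using hnorm
  have hval : hH.eigenvalues j = v ⬝ᵥ (S *ᵥ v) := by
    rw [heig, dotProduct_smul, smul_eq_mul, hvv, mul_one]
  set w : ι → ℝ := fun i => |v i| with hw
  have hww : w ⬝ᵥ w = 1 := by
    simp only [dotProduct, hw]
    rw [← hnorm]
    exact Finset.sum_congr rfl fun i _ => by rw [abs_mul_abs_self]
  have habs : |v ⬝ᵥ (S *ᵥ v)| ≤ w ⬝ᵥ (S *ᵥ w) := by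
    simp only [dotProduct, Matrix.mulVec, dotProduct]
    calc |∑ i, v i * ∑ l, S i l * v l| ≤ ∑ i, |v i * ∑ l, S i l * v l| :=
          Finset.abs_sum_le_sum_abs _ _
      _ ≤ ∑ i, w i * ∑ l, S i l * w l := by
          refine Finset.sum_le_sum fun i _ => ?_
          rw [abs_mul]
          refine mul_le_mul_of_nonneg_left ?_ (abs_nonneg _)
          calc |∑ l, S i l * v l| ≤ ∑ l, |S i l * v l| := Finset.abs_sum_le_sum_abs _ _
            _ = ∑ l, S i l * w l := Finset.sum_congr rfl fun l _ => by
                rw [abs_mul, abs_of_nonneg (hnn i l)]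
  have hray := rayleigh_le S hH w
  rw [hww, mul_one] at hray
  calc |hH.eigenvalues j| = |v ⬝ᵥ (S *ᵥ v)| := by rw [hval]
    _ ≤ w ⬝ᵥ (S *ᵥ w) := habs
    _ ≤ ⨆ i, hH.eigenvalues i := hray

lemma trace_pow_S_le [Nonempty ι] (S : Matrix ι ι ℝ) (hH : S.IsHermitian)
    (hnn : ∀ p q, 0 ≤ S p q) (k : ℕ) :
    (S ^ k).trace ≤ (Fintype.card ι : ℝ) * (⨆ i, hH.eigenvalues i) ^ k := by
  rw [trace_pow_eig S hH k]
  calc ∑ i, hH.eigenvalues i ^ k ≤ ∑ _i : ι, (⨆ i, hH.eigenvalues i) ^ k := by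
        refine Finset.sum_le_sum fun i _ => ?_
        calc hH.eigenvalues i ^ k ≤ |hH.eigenvalues i ^ k| := le_abs_self _
          _ = |hH.eigenvalues i| ^ k := abs_pow _ _
          _ ≤ (⨆ i, hH.eigenvalues i) ^ k :=
            pow_le_pow_left₀ (abs_nonneg _) (abs_eigen_le S hH hnn i) k
    _ = (Fintype.card ι : ℝ) * (⨆ i, hH.eigenvalues i) ^ k := by
        rw [Finset.sum_const, Finset.card_univ, nsmul_eq_mul]

end Stmt13Aux2

namespace Stmt13Aux3

lemma posSemidef_smul {m : Type*} [Fintype m] {A : Matrix m m ℝ}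
    (hA : A.PosSemidef) {c : ℝ} (hc : 0 ≤ c) : (c • A).PosSemidef :=
  hA.smul hc

lemma psdSqrt_spec {m : Type*} [Fintype m] [DecidableEq m] {A : Matrix m m ℝ}
    (hA : A.PosSemidef) : psdSqrt A * psdSqrt A = A ∧ (psdSqrt A)ᵀ = psdSqrt A := by
  rw [psdSqrt, dif_pos hA]
  have hUU : (star hA.1.eigenvectorUnitary : Matrix m m ℝ) * hA.1.eigenvectorUnitary.1 = 1 :=
    Unitary.coe_star_mul_self _
  have hdd : diagonal (fun i => Real.sqrt (hA.1.eigenvalues i)) *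
      diagonal (fun i => Real.sqrt (hA.1.eigenvalues i)) = diagonal hA.1.eigenvalues := by
    rw [diagonal_mul_diagonal]
    congr 1
    funext i
    exact Real.mul_self_sqrt (hA.eigenvalues_nonneg i)
  constructor
  · conv_rhs => rw [hA.1.spectral_theorem, Unitary.conjStarAlgAut_apply]
    rw [RCLike.ofReal_real_eq_id, Function.id_comp, ← hdd]
    calc _ = hA.1.eigenvectorUnitary.1 * (diagonal (fun i => Real.sqrt (hA.1.eigenvalues i)) *
          ((star hA.1.eigenvectorUnitary : Matrix m m ℝ) * hA.1.eigenvectorUnitary.1) *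
          diagonal (fun i => Real.sqrt (hA.1.eigenvalues i))) *
          (star hA.1.eigenvectorUnitary : Matrix m m ℝ) := by simp only [Matrix.mul_assoc]
      _ = _ := by rw [hUU, Matrix.mul_one]
  · rw [← Matrix.conjTranspose_eq_transpose_of_trivial, Matrix.star_eq_conjTranspose]
    simp [Matrix.conjTranspose_mul, Matrix.mul_assoc]

end Stmt13Aux3


/-- coherence bound on powers of the mix-Hessian.  For every
`k ≥ 2`, `Tr(D^k) ≤ (n_r n_f)^{1−k} λ_max(S)^k`. -/
theorem stmt13 (d nr nf : ℕ) (hd : 1 ≤ d) (hnr : 1 ≤ nr) (hnf : 1 ≤ nf)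
    (HR : Fin nr → Matrix (Fin d) (Fin d) ℝ) (HF : Fin nf → Matrix (Fin d) (Fin d) ℝ)
    (hHR : ∀ r, (HR r).PosSemidef) (hHF : ∀ f, (HF f).PosSemidef)
    (Cr' Cf' : ℝ) (hCr : 0 ≤ Cr') (hCf : 0 ≤ Cf') (hsum : Cr' + Cf' = 1) :
    ∀ k : ℕ, 2 ≤ k →
      ((Dmix Cr' Cf' HR HF ^ k).trace) ≤
        ((nr : ℝ) * nf) ^ ((1 : ℤ) - (k : ℤ)) * lamMax (Smat Cr' Cf' HR HF) ^ k := by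
  intro k hk
  have hnr' : (0:ℝ) < nr := by exact_mod_cast hnr
  have hnf' : (0:ℝ) < nf := by exact_mod_cast hnf
  have hN : (0:ℝ) < (nr:ℝ) * nf := mul_pos hnr' hnf'
  haveI : Nonempty (Fin nr × Fin nf) := ⟨(⟨0, hnr⟩, ⟨0, hnf⟩)⟩
  set c : ℝ := ((nr:ℝ) * nf)⁻¹ with hc
  have hc0 : 0 ≤ c := by positivity
  have hDp : ∀ p : Fin nr × Fin nf, (Drf Cr' Cf' HR HF p).PosSemidef := fun p =>
    (Stmt13Aux3.posSemidef_smul (hHR p.1) hCr).add (Stmt13Aux3.posSemidef_smul (hHF p.2) hCf)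
  set B : Fin nr × Fin nf → Matrix (Fin d) (Fin d) ℝ :=
    fun p => psdSqrt (Drf Cr' Cf' HR HF p) with hB
  have hBB : ∀ p, B p * B p = Drf Cr' Cf' HR HF p := fun p =>
    (Stmt13Aux3.psdSqrt_spec (hDp p)).1
  have hBt : ∀ p, (B p)ᵀ = B p := fun p => (Stmt13Aux3.psdSqrt_spec (hDp p)).2
  have hSdef : ∀ p q, Smat Cr' Cf' HR HF p q = frob (B p * B q) := fun p q => rfl
  have hSsymm : ∀ p q, Smat Cr' Cf' HR HF p q = Smat Cr' Cf' HR HF q p := by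
    intro p q
    rw [hSdef, hSdef, ← Stmt13Aux.frob_transpose (B p * B q), Matrix.transpose_mul,
      hBt, hBt]
  have hSH : (Smat Cr' Cf' HR HF).IsHermitian := by
    show (Smat Cr' Cf' HR HF)ᴴ = Smat Cr' Cf' HR HF
    rw [Matrix.conjTranspose_eq_transpose_of_trivial]
    ext p q
    rw [Matrix.transpose_apply]
    exact hSsymm q p
  have hSnn : ∀ p q, 0 ≤ Smat Cr' Cf' HR HF p q := fun p q => by
    rw [hSdef]; exact Stmt13Aux.frob_nonneg _
  have hlam : lamMax (Smat Cr' Cf' HR HF) = ⨆ i, hSH.eigenvalues i := dif_pos hSH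
  have hDmix : Dmix Cr' Cf' HR HF = c • ∑ p, Drf Cr' Cf' HR HF p := rfl
  obtain ⟨j, rfl⟩ : ∃ j, k = j + 2 := ⟨k - 2, by omega⟩
  have main := Stmt13Aux.trace_pow_le (Drf Cr' Cf' HR HF) B (Smat Cr' Cf' HR HF)
    hBB hSdef c hc0 j
  rw [← hDmix] at main
  have hspec := Stmt13Aux2.trace_pow_S_le (Smat Cr' Cf' HR HF) hSH hSnn (j+2)
  have hcard : (Fintype.card (Fin nr × Fin nf) : ℝ) = (nr:ℝ) * nf := by simp
  have hNne : ((nr:ℝ) * nf) ≠ 0 := hN.ne'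
  calc ((Dmix Cr' Cf' HR HF) ^ (j+2)).trace
      ≤ c ^ (j+2) * ((Smat Cr' Cf' HR HF) ^ (j+2)).trace := main
    _ ≤ c ^ (j+2) * (((nr:ℝ)*nf) * (⨆ i, hSH.eigenvalues i) ^ (j+2)) := by
        refine mul_le_mul_of_nonneg_left ?_ (by positivity)
        rw [← hcard]; exact hspec
    _ = ((nr : ℝ) * nf) ^ ((1 : ℤ) - ((j+2 : ℕ) : ℤ)) * lamMax (Smat Cr' Cf' HR HF) ^ (j+2) := by
        rw [hlam, hc, zpow_sub₀ hNne, zpow_one, zpow_natCast, inv_pow]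
        field_simp


end
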